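/- (Pointwise domination of the commutator kernel.) Let n ≥ 1 be an integer, α ∈ (0,2), λ ∈ (0,1), and κ ≥ 2 an even integer, and let w = w_{λ,κ}. Then there exists a constant C = C(n,λ,κ) > 0 such that for every measurable function f : ℝⁿ → ℝ and every x ∈ ℝⁿ, ∫_{ℝⁿ} |w(x) − w(y)| · |f(y)| / |x−y|^{n+α/2} dy ≤ C · √(w(x)) · ∫_{ℝⁿ} min( |x−y|^{−(n−1+α/2)}, |x−y|^{−(n−λ/2+α/2)} ) · √(w(y)) · |f(y)| dy, where both sides are allowed to be +∞. -/

import Mathlib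

open Real MeasureTheory

/-- The Muckenhoupt-type weight `w_{λ,κ}(x) = (1 + |x|^κ)^(−λ/κ)` on `ℝⁿ`. -/
noncomputable def weight (n : ℕ) (lam : ℝ) (kap : ℕ) (x : EuclideanSpace ℝ (Fin n)) : ℝ :=
  (1 + ‖x‖ ^ kap) ^ (-(lam / (kap : ℝ)))

set_option maxHeartbeats 1000000 in
lemma real_key {lam : ℝ} {kap : ℕ} (hlam0 : 0 < lam) (hlam1 : lam < 1) (hkap : 2 ≤ kap)
    {r s t : ℝ} (hs0 : 0 ≤ s) (hsr : s ≤ r) (ht0 : 0 ≤ t) (hrst : r - s ≤ t) :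
    (1 + s ^ kap) ^ (-(lam / kap)) - (1 + r ^ kap) ^ (-(lam / kap)) ≤
      (kap : ℝ) * 2 ^ kap *
        ((1 + r ^ kap) ^ (-(lam / (kap : ℝ)) / 2) * (1 + s ^ kap) ^ (-(lam / (kap : ℝ)) / 2)) *
        min t (t ^ (lam / 2)) := by
  have hr0 : 0 ≤ r := hs0.trans hsr
  have hkap0 : (0:ℝ) < kap := by positivity
  have hkap2 : (2:ℝ) ≤ kap := by exact_mod_cast hkap
  set p : ℝ := lam / kap with hp
  have hp0 : 0 < p := by positivity
  have hp1 : p ≤ 1 := by rw [hp, div_le_one hkap0]; linarith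
  have hkne : (kap:ℝ) ≠ 0 := ne_of_gt hkap0
  have hpk : (kap : ℝ) * (p / 2) = lam / 2 := by rw [hp]; field_simp
  set A : ℝ := 1 + r ^ kap with hA
  set B : ℝ := 1 + s ^ kap with hB
  have hsk : (0:ℝ) ≤ s ^ kap := by positivity
  have hB1 : (1:ℝ) ≤ B := by simp only [hB]; linarith
  have hBA : B ≤ A := by
    have := pow_le_pow_left₀ hs0 hsr kap
    simp only [hA, hB]; linarith
  have hA1 : (1:ℝ) ≤ A := hB1.trans hBA
  have hA0 : (0:ℝ) < A := by linarith
  have hB0 : (0:ℝ) < B := by linarith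
  rcases eq_or_lt_of_le ht0 with ht | ht
  · have hrs : r = s := le_antisymm (by linarith) hsr
    have hm : min t (t ^ (lam / 2)) = 0 := by
      rw [← ht, Real.zero_rpow (by positivity : lam / 2 ≠ 0)]; simp
    have hABeq : A = B := by rw [hA, hB, hrs]
    rw [hm, mul_zero, hABeq]
    simp
  -- Bernoulli-type bound
  have bern : A ^ p ≤ B ^ p + p * (A - B) * B ^ (p - 1) := by
    have hs' : (0:ℝ) ≤ (A - B) / B := by
      apply div_nonneg _ hB0.le; linarith
    have h1 : (1 + (A - B) / B) ^ p ≤ 1 + p * ((A - B) / B) :=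
      rpow_one_add_le_one_add_mul_self (by linarith) hp0.le hp1
    have hAeq : B * (1 + (A - B) / B) = A := by field_simp; ring
    calc A ^ p = B ^ p * (1 + (A - B) / B) ^ p := by
          rw [← Real.mul_rpow hB0.le (by linarith), hAeq]
      _ ≤ B ^ p * (1 + p * ((A - B) / B)) :=
          mul_le_mul_of_nonneg_left h1 (Real.rpow_nonneg hB0.le p)
      _ = B ^ p + p * (A - B) * (B ^ p / B) := by field_simp
      _ = B ^ p + p * (A - B) * B ^ (p - 1) := by
          rw [Real.rpow_sub hB0, Real.rpow_one]
  have hu0 : 0 < A ^ (p/2) := Real.rpow_pos_of_pos hA0 _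
  have hv0 : 0 < B ^ (p/2) := Real.rpow_pos_of_pos hB0 _
  have h2k1 : (1:ℝ) ≤ 2 ^ (kap - 1) := one_le_pow₀ one_le_two
  have h2k : (2:ℝ) ^ kap = 2 * 2 ^ (kap - 1) := by
    rw [← pow_succ']; congr 1; omega
  have h2kpos : (0:ℝ) < 2 ^ kap := by positivity
  -- the key multiplied inequality
  have key2 : A ^ p - B ^ p ≤
      ((kap : ℝ) * 2 ^ kap * min t (t ^ (lam / 2))) * (A ^ (p/2) * B ^ (p/2)) := by
    rcases le_total t 1 with ht1 | ht1
    · -- short range: Lipschitz-type bound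
      have hmin : min t (t ^ (lam / 2)) = t := by
        apply min_eq_left
        have := Real.rpow_le_rpow_of_exponent_ge ht ht1 (by linarith : lam / 2 ≤ 1)
        rwa [Real.rpow_one] at this
      have hgeom : r ^ kap - s ^ kap ≤ (kap : ℝ) * r ^ (kap - 1) * (r - s) := by
        have hid := geom_sum₂_mul r s kap
        have hsum : (∑ i ∈ Finset.range kap, r ^ i * s ^ (kap - 1 - i)) ≤
            (kap : ℝ) * r ^ (kap - 1) := by
          calc (∑ i ∈ Finset.range kap, r ^ i * s ^ (kap - 1 - i))
              ≤ ∑ _i ∈ Finset.range kap, r ^ (kap - 1) := by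
                apply Finset.sum_le_sum
                intro i hi
                have hi' := Finset.mem_range.mp hi
                calc r ^ i * s ^ (kap - 1 - i) ≤ r ^ i * r ^ (kap - 1 - i) :=
                      mul_le_mul_of_nonneg_left (pow_le_pow_left₀ hs0 hsr _) (pow_nonneg hr0 i)
                  _ = r ^ (kap - 1) := by rw [← pow_add]; congr 1; omega
            _ = (kap : ℝ) * r ^ (kap - 1) := by
                simp [Finset.sum_const, nsmul_eq_mul]
        calc r ^ kap - s ^ kap
            = (∑ i ∈ Finset.range kap, r ^ i * s ^ (kap - 1 - i)) * (r - s) := hid.symm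
          _ ≤ ((kap : ℝ) * r ^ (kap - 1)) * (r - s) :=
              mul_le_mul_of_nonneg_right hsum (by linarith)
      have hrk1A : r ^ (kap - 1) ≤ A := by
        rcases le_total r 1 with h | h
        · have : r ^ (kap - 1) ≤ 1 := pow_le_one₀ hr0 h
          linarith
        · have h1 : r ^ (kap - 1) ≤ r ^ kap := pow_le_pow_right₀ h (by omega)
          have : (0:ℝ) ≤ r ^ kap := by positivity
          simp only [hA]; linarith
      have hAB : A - B ≤ (kap : ℝ) * A * t := by
        have h1 : (kap : ℝ) * r ^ (kap - 1) * (r - s) ≤ (kap : ℝ) * r ^ (kap - 1) * t :=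
          mul_le_mul_of_nonneg_left hrst (by positivity)
        have h2 : (kap : ℝ) * r ^ (kap - 1) * t ≤ (kap : ℝ) * A * t := by
          have := mul_le_mul_of_nonneg_left hrk1A (le_of_lt hkap0)
          exact mul_le_mul_of_nonneg_right this ht0
        have : A - B = r ^ kap - s ^ kap := by simp only [hA, hB]; ring
        linarith [hgeom]
      have hA2B : A ≤ 2 ^ kap * B := by
        have hrs1 : r ≤ s + 1 := by linarith
        have hrp : r ^ kap ≤ (s + 1) ^ kap := pow_le_pow_left₀ hr0 hrs1 kap
        have hadd : (s + 1) ^ kap ≤ 2 ^ (kap - 1) * (s ^ kap + 1 ^ kap) :=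
          add_pow_le hs0 zero_le_one kap
        simp only [one_pow] at hadd
        have hx : (1:ℝ) ≤ 2 ^ (kap - 1) * (1 + s ^ kap) := by nlinarith
        simp only [hA, hB]
        nlinarith
      have claim : A * B ^ (p - 1) ≤ 2 ^ kap * (A ^ (p/2) * B ^ (p/2)) := by
        have hq0 : (0:ℝ) < 1 - p/2 := by linarith
        have hBq : 0 < B ^ (1 - p/2) := Real.rpow_pos_of_pos hB0 _
        have e1 : A ^ (p/2) * A ^ (1 - p/2) = A := by
          rw [← Real.rpow_add hA0, show p/2 + (1 - p/2) = 1 by ring, Real.rpow_one]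
        have e2 : B ^ (p - 1) = B ^ (p/2) / B ^ (1 - p/2) := by
          rw [← Real.rpow_sub hB0]; congr 1; ring
        have e3 : A ^ (1 - p/2) ≤ 2 ^ kap * B ^ (1 - p/2) := by
          calc A ^ (1 - p/2) ≤ (2 ^ kap * B) ^ (1 - p/2) :=
                Real.rpow_le_rpow hA0.le hA2B hq0.le
            _ = (2 ^ kap : ℝ) ^ (1 - p/2 : ℝ) * B ^ (1 - p/2) :=
                Real.mul_rpow h2kpos.le hB0.le
            _ ≤ 2 ^ kap * B ^ (1 - p/2) := by
                have h4 : ((2:ℝ) ^ kap) ^ (1 - p/2 : ℝ) ≤ ((2:ℝ) ^ kap) ^ (1:ℝ) :=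
                  Real.rpow_le_rpow_of_exponent_le (by linarith) (by linarith)
                rw [Real.rpow_one] at h4
                exact mul_le_mul_of_nonneg_right h4 hBq.le
        have e4 : A ^ (1 - p/2) / B ^ (1 - p/2) ≤ 2 ^ kap := by
          rw [div_le_iff₀ hBq]; linarith
        calc A * B ^ (p - 1)
            = (A ^ (p/2) * A ^ (1 - p/2)) * (B ^ (p/2) / B ^ (1 - p/2)) := by rw [e1, ← e2]
          _ = A ^ (p/2) * B ^ (p/2) * (A ^ (1 - p/2) / B ^ (1 - p/2)) := by ring
          _ ≤ A ^ (p/2) * B ^ (p/2) * 2 ^ kap :=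
              mul_le_mul_of_nonneg_left e4 (by positivity)
          _ = 2 ^ kap * (A ^ (p/2) * B ^ (p/2)) := by ring
      have hBp1 : (0:ℝ) ≤ B ^ (p - 1) := Real.rpow_nonneg hB0.le _
      calc A ^ p - B ^ p ≤ p * (A - B) * B ^ (p - 1) := by linarith
        _ ≤ 1 * ((kap : ℝ) * A * t) * B ^ (p - 1) := by
            apply mul_le_mul_of_nonneg_right _ hBp1
            apply mul_le_mul hp1 hAB (by linarith) zero_le_one
        _ = ((kap : ℝ) * t) * (A * B ^ (p - 1)) := by ring
        _ ≤ ((kap : ℝ) * t) * (2 ^ kap * (A ^ (p/2) * B ^ (p/2))) :=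
            mul_le_mul_of_nonneg_left claim (by positivity)
        _ = ((kap : ℝ) * 2 ^ kap * min t (t ^ (lam / 2))) * (A ^ (p/2) * B ^ (p/2)) := by
            rw [hmin]; ring
    · -- long range
      have hmin : min t (t ^ (lam / 2)) = t ^ (lam / 2) := by
        apply min_eq_right
        have := Real.rpow_le_rpow_of_exponent_le ht1 (by linarith : lam / 2 ≤ 1)
        rwa [Real.rpow_one] at this
      have htk1 : (1:ℝ) ≤ t ^ kap := one_le_pow₀ ht1
      have hA2 : A ≤ 2 ^ kap * B * t ^ kap := by
        have hrs1 : r ≤ s + t := by linarith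
        have hrp : r ^ kap ≤ (s + t) ^ kap := pow_le_pow_left₀ hr0 hrs1 kap
        have hadd : (s + t) ^ kap ≤ 2 ^ (kap - 1) * (s ^ kap + t ^ kap) :=
          add_pow_le hs0 ht0 kap
        simp only [hA, hB]
        nlinarith [mul_le_mul_of_nonneg_left htk1 (le_trans zero_le_one h2k1),
          mul_nonneg (mul_nonneg (le_trans zero_le_one h2k1) hsk) (by linarith : (0:ℝ) ≤ t ^ kap - 1),
          mul_nonneg (le_trans zero_le_one h2k1) hsk]
      have keyA : A ^ (p/2) ≤ 2 ^ kap * B ^ (p/2) * t ^ (lam / 2) := by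
        have hp2 : (0:ℝ) ≤ p/2 := by positivity
        calc A ^ (p/2) ≤ (2 ^ kap * B * t ^ kap) ^ (p/2) :=
              Real.rpow_le_rpow hA0.le hA2 hp2
          _ = ((2:ℝ) ^ kap) ^ (p/2 : ℝ) * B ^ (p/2) * ((t ^ kap : ℝ)) ^ (p/2 : ℝ) := by
              rw [Real.mul_rpow (by positivity) (by positivity),
                Real.mul_rpow h2kpos.le hB0.le]
          _ = ((2:ℝ) ^ kap) ^ (p/2 : ℝ) * B ^ (p/2) * t ^ (lam / 2) := by
              rw [← Real.rpow_natCast t kap, ← Real.rpow_mul ht0, hpk]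
          _ ≤ 2 ^ kap * B ^ (p/2) * t ^ (lam / 2) := by
              have h4 : ((2:ℝ) ^ kap) ^ (p/2 : ℝ) ≤ ((2:ℝ) ^ kap) ^ (1:ℝ) :=
                Real.rpow_le_rpow_of_exponent_le (by linarith) (by linarith)
              rw [Real.rpow_one] at h4
              apply mul_le_mul_of_nonneg_right _ (Real.rpow_nonneg ht0 _)
              exact mul_le_mul_of_nonneg_right h4 hv0.le
      have hApd : A ^ (p/2) * A ^ (p/2) = A ^ p := by
        rw [← Real.rpow_add hA0, show p/2 + p/2 = p by ring]
      have htl0 : (0:ℝ) ≤ t ^ (lam/2) := Real.rpow_nonneg ht0 _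
      calc A ^ p - B ^ p ≤ A ^ p := by
            have := Real.rpow_nonneg hB0.le p; linarith
        _ = A ^ (p/2) * A ^ (p/2) := hApd.symm
        _ ≤ (2 ^ kap * B ^ (p/2) * t ^ (lam / 2)) * A ^ (p/2) :=
            mul_le_mul_of_nonneg_right keyA hu0.le
        _ = 1 * 2 ^ kap * (A ^ (p/2) * B ^ (p/2)) * t ^ (lam/2) := by ring
        _ ≤ (kap : ℝ) * 2 ^ kap * (A ^ (p/2) * B ^ (p/2)) * t ^ (lam/2) := by
            apply mul_le_mul_of_nonneg_right _ htl0
            apply mul_le_mul_of_nonneg_right _ (by positivity)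
            apply mul_le_mul_of_nonneg_right _ h2kpos.le
            linarith
        _ = ((kap : ℝ) * 2 ^ kap * min t (t ^ (lam / 2))) * (A ^ (p/2) * B ^ (p/2)) := by
            rw [hmin]; ring
  -- convert the multiplied inequality back
  have hM0 : 0 ≤ min t (t ^ (lam / 2)) := le_min ht0 (Real.rpow_nonneg ht0 _)
  have hK0 : 0 ≤ (kap : ℝ) * 2 ^ kap * min t (t ^ (lam / 2)) := by positivity
  have hexp : -(p) / 2 = -(p/2) := by ring
  rw [hexp, Real.rpow_neg hA0.le p, Real.rpow_neg hB0.le p,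
    Real.rpow_neg hA0.le (p/2), Real.rpow_neg hB0.le (p/2)]
  have hu2 : A ^ p = A ^ (p/2) * A ^ (p/2) := by
    rw [← Real.rpow_add hA0, show p/2 + p/2 = p by ring]
  have hv2 : B ^ p = B ^ (p/2) * B ^ (p/2) := by
    rw [← Real.rpow_add hB0, show p/2 + p/2 = p by ring]
  rw [hu2, hv2]
  set u := A ^ (p/2)
  set v := B ^ (p/2)
  have e5 : (v * v)⁻¹ - (u * u)⁻¹ = (u * u - v * v) / ((u * u) * (v * v)) := by
    field_simp
  have e6 : (kap : ℝ) * 2 ^ kap * (u⁻¹ * v⁻¹) * min t (t ^ (lam / 2)) =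
      (((kap : ℝ) * 2 ^ kap * min t (t ^ (lam / 2))) * (u * v)) / ((u * u) * (v * v)) := by
    field_simp
  rw [e5, e6]
  gcongr
  linarith [key2]

lemma sqrt_weight_eq (n : ℕ) (lam : ℝ) (kap : ℕ) (z : EuclideanSpace ℝ (Fin n)) :
    Real.sqrt (weight n lam kap z) = (1 + ‖z‖ ^ kap) ^ (-(lam / (kap : ℝ)) / 2) := by
  have h0 : (0:ℝ) ≤ 1 + ‖z‖ ^ kap := by positivity
  rw [weight, Real.sqrt_eq_rpow, ← Real.rpow_mul h0]
  congr 1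
  ring

lemma weight_key {n : ℕ} {lam : ℝ} {kap : ℕ} (hlam0 : 0 < lam) (hlam1 : lam < 1)
    (hkap : 2 ≤ kap) (x y : EuclideanSpace ℝ (Fin n)) :
    |weight n lam kap x - weight n lam kap y| ≤
      (kap : ℝ) * 2 ^ kap * (Real.sqrt (weight n lam kap x) * Real.sqrt (weight n lam kap y)) *
        min ‖x - y‖ (‖x - y‖ ^ (lam / 2)) := by
  rw [sqrt_weight_eq, sqrt_weight_eq]
  rcases le_total ‖y‖ ‖x‖ with h | h
  · have hw : weight n lam kap x ≤ weight n lam kap y := by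
      rw [weight, weight]
      apply Real.rpow_le_rpow_of_nonpos (by positivity)
      · have := pow_le_pow_left₀ (norm_nonneg y) h kap; linarith
      · have : (0:ℝ) < kap := by positivity
        have : 0 < lam / (kap:ℝ) := by positivity
        linarith
    rw [abs_of_nonpos (by linarith), neg_sub]
    exact real_key hlam0 hlam1 hkap (norm_nonneg y) h (norm_nonneg _) (norm_sub_norm_le x y)
  · have hw : weight n lam kap y ≤ weight n lam kap x := by
      rw [weight, weight]
      apply Real.rpow_le_rpow_of_nonpos (by positivity)
      · have := pow_le_pow_left₀ (norm_nonneg x) h kap; linarith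
      · have : (0:ℝ) < kap := by positivity
        have : 0 < lam / (kap:ℝ) := by positivity
        linarith
    rw [abs_of_nonneg (by linarith)]
    have hnorm : ‖y‖ - ‖x‖ ≤ ‖x - y‖ := by
      have := norm_sub_norm_le y x
      rwa [norm_sub_rev] at this
    have := real_key hlam0 hlam1 hkap (norm_nonneg x) h (norm_nonneg (x - y)) hnorm
    calc weight n lam kap x - weight n lam kap y
        = (1 + ‖x‖ ^ kap) ^ (-(lam / (kap:ℝ))) - (1 + ‖y‖ ^ kap) ^ (-(lam / (kap:ℝ))) := rfl
      _ ≤ (kap : ℝ) * 2 ^ kap *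
            ((1 + ‖y‖ ^ kap) ^ (-(lam / (kap : ℝ)) / 2) * (1 + ‖x‖ ^ kap) ^ (-(lam / (kap : ℝ)) / 2)) *
            min ‖x - y‖ (‖x - y‖ ^ (lam / 2)) := this
      _ = (kap : ℝ) * 2 ^ kap *
            ((1 + ‖x‖ ^ kap) ^ (-(lam / (kap : ℝ)) / 2) * (1 + ‖y‖ ^ kap) ^ (-(lam / (kap : ℝ)) / 2)) *
            min ‖x - y‖ (‖x - y‖ ^ (lam / 2)) := by ring

theorem stmt_9 (n : ℕ) (hn : 1 ≤ n) (α : ℝ) (hα : α ∈ Set.Ioo (0 : ℝ) 2)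
    (lam : ℝ) (hlam : lam ∈ Set.Ioo (0 : ℝ) 1)
    (kap : ℕ) (hkap : 2 ≤ kap) (hke : Even kap) :
    ∃ C > 0, ∀ f : EuclideanSpace ℝ (Fin n) → ℝ, Measurable f →
      ∀ x : EuclideanSpace ℝ (Fin n),
      (∫⁻ y, ENNReal.ofReal
          (|weight n lam kap x - weight n lam kap y| * |f y| / ‖x - y‖ ^ ((n : ℝ) + α / 2))) ≤
        ENNReal.ofReal (C * Real.sqrt (weight n lam kap x)) *
          ∫⁻ y, ENNReal.ofReal
            (min (‖x - y‖ ^ (-((n : ℝ) - 1 + α / 2))) (‖x - y‖ ^ (-((n : ℝ) - lam / 2 + α / 2))) *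
              Real.sqrt (weight n lam kap y) * |f y|) := by
  obtain ⟨hα0, hα2⟩ := hα
  obtain ⟨hlam0, hlam1⟩ := hlam
  refine ⟨(kap : ℝ) * 2 ^ kap, by positivity, ?_⟩
  intro f hf x
  set C : ℝ := (kap : ℝ) * 2 ^ kap with hC
  have hC0 : (0:ℝ) < C := by positivity
  have point : ∀ y : EuclideanSpace ℝ (Fin n),
      |weight n lam kap x - weight n lam kap y| * |f y| / ‖x - y‖ ^ ((n : ℝ) + α / 2) ≤
        (C * Real.sqrt (weight n lam kap x)) *
          (min (‖x - y‖ ^ (-((n : ℝ) - 1 + α / 2))) (‖x - y‖ ^ (-((n : ℝ) - lam / 2 + α / 2))) *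
            Real.sqrt (weight n lam kap y) * |f y|) := by
    intro y
    rcases eq_or_lt_of_le (norm_nonneg (x - y)) with hxy | hxy
    · have hx : x = y := by
        have := (norm_eq_zero.mp hxy.symm); rwa [sub_eq_zero] at this
      rw [hx, sub_self, abs_zero, zero_mul, zero_div]
      positivity
    · set t : ℝ := ‖x - y‖ with htdef
      have hE : (0:ℝ) < (n : ℝ) + α / 2 := by
        have : (1:ℝ) ≤ n := by exact_mod_cast hn
        linarith
      have htE : (0:ℝ) < t ^ ((n : ℝ) + α / 2) := Real.rpow_pos_of_pos hxy _
      have hmin : min t (t ^ (lam / 2)) / t ^ ((n : ℝ) + α / 2) =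
          min (t ^ (-((n : ℝ) - 1 + α / 2))) (t ^ (-((n : ℝ) - lam / 2 + α / 2))) := by
        rw [div_eq_mul_inv, min_mul_of_nonneg _ _ (by positivity : (0:ℝ) ≤ (t ^ ((n : ℝ) + α / 2))⁻¹)]
        have e1 : t * (t ^ ((n : ℝ) + α / 2))⁻¹ = t ^ (-((n : ℝ) - 1 + α / 2)) := by
          rw [← Real.rpow_neg hxy.le]
          nth_rewrite 1 [← Real.rpow_one t]
          rw [← Real.rpow_add hxy]
          congr 1; ring
        have e2 : t ^ (lam / 2) * (t ^ ((n : ℝ) + α / 2))⁻¹ =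
            t ^ (-((n : ℝ) - lam / 2 + α / 2)) := by
          rw [← Real.rpow_neg hxy.le, ← Real.rpow_add hxy]
          congr 1; ring
        rw [e1, e2]
      calc |weight n lam kap x - weight n lam kap y| * |f y| / t ^ ((n : ℝ) + α / 2)
          ≤ C * (Real.sqrt (weight n lam kap x) * Real.sqrt (weight n lam kap y)) *
              min t (t ^ (lam / 2)) * |f y| / t ^ ((n : ℝ) + α / 2) := by
            gcongr
            exact weight_key hlam0 hlam1 hkap x y
        _ = (C * Real.sqrt (weight n lam kap x)) *
              ((min t (t ^ (lam / 2)) / t ^ ((n : ℝ) + α / 2)) *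
                Real.sqrt (weight n lam kap y) * |f y|) := by ring
        _ = (C * Real.sqrt (weight n lam kap x)) *
              (min (t ^ (-((n : ℝ) - 1 + α / 2))) (t ^ (-((n : ℝ) - lam / 2 + α / 2))) *
                Real.sqrt (weight n lam kap y) * |f y|) := by rw [hmin]
  have hCw : (0:ℝ) ≤ C * Real.sqrt (weight n lam kap x) := by positivity
  calc (∫⁻ y, ENNReal.ofReal
          (|weight n lam kap x - weight n lam kap y| * |f y| / ‖x - y‖ ^ ((n : ℝ) + α / 2)))
      ≤ ∫⁻ y, ENNReal.ofReal ((C * Real.sqrt (weight n lam kap x)) *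
          (min (‖x - y‖ ^ (-((n : ℝ) - 1 + α / 2))) (‖x - y‖ ^ (-((n : ℝ) - lam / 2 + α / 2))) *
            Real.sqrt (weight n lam kap y) * |f y|)) :=
        lintegral_mono fun y => ENNReal.ofReal_le_ofReal (point y)
    _ = ∫⁻ y, ENNReal.ofReal (C * Real.sqrt (weight n lam kap x)) * ENNReal.ofReal
          (min (‖x - y‖ ^ (-((n : ℝ) - 1 + α / 2))) (‖x - y‖ ^ (-((n : ℝ) - lam / 2 + α / 2))) *
            Real.sqrt (weight n lam kap y) * |f y|) := by
        simp_rw [ENNReal.ofReal_mul hCw]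
    _ = ENNReal.ofReal (C * Real.sqrt (weight n lam kap x)) *
          ∫⁻ y, ENNReal.ofReal
            (min (‖x - y‖ ^ (-((n : ℝ) - 1 + α / 2))) (‖x - y‖ ^ (-((n : ℝ) - lam / 2 + α / 2))) *
              Real.sqrt (weight n lam kap y) * |f y|) :=
        lintegral_const_mul' _ _ ENNReal.ofReal_ne_top
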